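/- arXiv:2405.02829 — 5 statements merged into one kernel-verified Lean document; each statement's English description precedes it below -/
import Mathlib

section
/- Let G be a graph, X an odd cycle transversal of G, and (A,B) the color classes of the bipartite graph G − X. For a subset Y ⊆ X, let G_Y be the bipartite subgraph of G with color classes A ∪ Y and B ∪ (X \ Y) containing exactly those edges of G with one endpoint in A ∪ Y and the other in B ∪ (X \ Y). Then for every perfect matching M of G, there exists a subset Y ⊆ X such that M is a perfect matching of G_Y. -/
/-- `M` is a perfect matching of `G`, viewed as a set of edges: every edge of `M`
is an edge of `G`, and every vertex lies on exactly one edge of `M`. -/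
def PerfM {V : Type*} (G : SimpleGraph V) (M : Set (Sym2 V)) : Prop :=
  M ⊆ G.edgeSet ∧ ∀ v : V, ∃! e, e ∈ M ∧ v ∈ e

/-- The bipartite subgraph `G_Y` of `G` with color classes `A ∪ Y` and `B ∪ (X \ Y)`,
keeping exactly the edges of `G` with one endpoint in each class. -/
def GY {V : Type*} (G : SimpleGraph V) (X A B Y : Set V) : SimpleGraph V where
  Adj u v := G.Adj u v ∧
    ((u ∈ A ∪ Y ∧ v ∈ B ∪ (X \ Y)) ∨ (v ∈ A ∪ Y ∧ u ∈ B ∪ (X \ Y)))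
  symm := by
    constructor
    intro u v h
    exact ⟨h.1.symm, h.2.elim Or.inr Or.inl⟩
  loopless := by
    constructor
    intro v h
    exact G.loopless.irrefl v h.1

theorem stmt0 {V : Type*} (G : SimpleGraph V) (X A B : Set V)
    (hcover : ∀ v : V, v ∈ A ∨ v ∈ B ∨ v ∈ X)
    (hAB : Disjoint A B) (hAX : Disjoint A X) (hBX : Disjoint B X)
    (hA : ∀ u ∈ A, ∀ v ∈ A, ¬ G.Adj u v) (hB : ∀ u ∈ B, ∀ v ∈ B, ¬ G.Adj u v)
    (M : Set (Sym2 V)) (hM : PerfM G M) :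
    ∃ Y ⊆ X, PerfM (GY G X A B Y) M := by
  classical
  have hpart : ∀ v : V, ∃ w, s(v, w) ∈ M := by
    intro v
    obtain ⟨e, ⟨heM, hve⟩, -⟩ := hM.2 v
    exact ⟨Sym2.Mem.other hve, by rwa [Sym2.other_spec hve]⟩
  choose f hf using hpart
  have huniq : ∀ u v : V, s(u, v) ∈ M → f u = v := by
    intro u v huv
    obtain ⟨e, -, hux⟩ := hM.2 u
    have h1 := hux s(u, f u) ⟨hf u, Sym2.mem_mk_left _ _⟩
    have h2 := hux s(u, v) ⟨huv, Sym2.mem_mk_left _ _⟩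
    have h3 : s(u, f u) = s(u, v) := h1.trans h2.symm
    rw [Sym2.eq_iff] at h3
    rcases h3 with ⟨-, h⟩ | ⟨huv', h⟩
    · exact h
    · subst huv'; exact h
  set r := WellOrderingRel (α := V) with hr
  have hwo : IsWellOrder V r := WellOrderingRel.isWellOrder
  set Y : Set V := {x | x ∈ X ∧ (f x ∈ B ∨ (f x ∈ X ∧ r x (f x)))} with hYdef
  refine ⟨Y, fun x hx => hx.1, ?_, hM.2⟩
  intro e heM
  induction e using Sym2.ind with
  | _ u v =>
    have hadj : G.Adj u v := hM.1 heM
    have hfu : f u = v := huniq u v heM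
    have hfv : f v = u := huniq v u (by rwa [Sym2.eq_swap] at heM)
    have hne : u ≠ v := hadj.ne
    rw [SimpleGraph.mem_edgeSet]
    refine ⟨hadj, ?_⟩
    have hYu : u ∈ Y ↔ u ∈ X ∧ (v ∈ B ∨ (v ∈ X ∧ r u v)) := by
      rw [hYdef]; simp only [Set.mem_setOf_eq, hfu]
    have hYv : v ∈ Y ↔ v ∈ X ∧ (u ∈ B ∨ (u ∈ X ∧ r v u)) := by
      rw [hYdef]; simp only [Set.mem_setOf_eq, hfv]
    rcases hcover u with hu | hu | hu
    · -- u ∈ A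
      rcases hcover v with hv | hv | hv
      · exact absurd hadj (hA u hu v hv)
      · exact Or.inl ⟨Or.inl hu, Or.inl hv⟩
      · -- v ∈ X; v ∉ Y since f v = u ∈ A
        have hvY : v ∉ Y := by
          rw [hYv]
          rintro ⟨-, h | ⟨huX, -⟩⟩
          · exact hAB.ne_of_mem hu h rfl
          · exact hAX.ne_of_mem hu huX rfl
        exact Or.inl ⟨Or.inl hu, Or.inr ⟨hv, hvY⟩⟩
    · -- u ∈ B
      rcases hcover v with hv | hv | hv
      · exact Or.inr ⟨Or.inl hv, Or.inl hu⟩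
      · exact absurd hadj (hB u hu v hv)
      · -- v ∈ X; v ∈ Y since f v = u ∈ B
        have hvY : v ∈ Y := hYv.mpr ⟨hv, Or.inl hu⟩
        exact Or.inr ⟨Or.inr hvY, Or.inl hu⟩
    · -- u ∈ X
      rcases hcover v with hv | hv | hv
      · -- v ∈ A; u ∉ Y
        have huY : u ∉ Y := by
          rw [hYu]
          rintro ⟨-, h | ⟨hvX, -⟩⟩
          · exact hAB.ne_of_mem hv h rfl
          · exact hAX.ne_of_mem hv hvX rfl
        exact Or.inr ⟨Or.inl hv, Or.inr ⟨hu, huY⟩⟩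
      · -- v ∈ B; u ∈ Y
        have huY : u ∈ Y := hYu.mpr ⟨hu, Or.inl hv⟩
        exact Or.inl ⟨Or.inr huY, Or.inl hv⟩
      · -- both in X
        have huB : u ∉ B := fun h => hBX.ne_of_mem h hu rfl
        have hvB : v ∉ B := fun h => hBX.ne_of_mem h hv rfl
        rcases (show r u v ∨ u = v ∨ r v u by have := hwo.trichotomous u v; tauto) with hlt | heq | hgt
        · have huY : u ∈ Y := hYu.mpr ⟨hu, Or.inr ⟨hv, hlt⟩⟩
          have hvY : v ∉ Y := by
            rw [hYv]
            rintro ⟨-, h | ⟨-, hgt⟩⟩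
            · exact huB h
            · exact hwo.toIsWellFounded.wf.asymmetric _ _ hlt hgt
          exact Or.inl ⟨Or.inr huY, Or.inr ⟨hv, hvY⟩⟩
        · exact absurd heq hne
        · have hvY : v ∈ Y := hYv.mpr ⟨hv, Or.inr ⟨hu, hgt⟩⟩
          have huY : u ∉ Y := by
            rw [hYu]
            rintro ⟨-, h | ⟨-, hlt⟩⟩
            · exact hvB h
            · exact hwo.toIsWellFounded.wf.asymmetric _ _ hlt hgt
          exact Or.inr ⟨Or.inr hvY, Or.inr ⟨hu, huY⟩⟩
end

section
/- Let G be a 0/1-edge-weighted graph, M a perfect matching in G, and k an integer. Then G has a perfect matching of weight congruent to k modulo 2 if and only if the weight of M is congruent to k modulo 2, or G has an M-alternating cycle of odd weight. -/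
def AltList {V : Type*} (M : Set (Sym2 V)) (l : List (Sym2 V)) : Prop :=
  l.Chain' fun e f => (e ∈ M ↔ f ∉ M)

def AltCycle {V : Type*} (G : SimpleGraph V) (M : Set (Sym2 V)) {x : V}
    (c : G.Walk x x) : Prop :=
  c.IsCycle ∧ AltList M c.edges ∧
    ∀ h : c.edges ≠ [], (c.edges.getLast h ∈ M ↔ c.edges.head h ∉ M)

open SimpleGraph

namespace Stmt4Aux

set_option linter.unusedSectionVars false

variable {V : Type*} [DecidableEq V] {G : SimpleGraph V} {A : Set (Sym2 V)}

/-! ### partner machinery -/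

lemma pm_unique {A : Set (Sym2 V)} (hA : PerfM G A) {e f : Sym2 V} {v : V}
    (he : e ∈ A) (hf : f ∈ A) (hve : v ∈ e) (hvf : v ∈ f) : e = f := by
  obtain ⟨g, -, hg⟩ := hA.2 v
  rw [hg e ⟨he, hve⟩, hg f ⟨hf, hvf⟩]

noncomputable def prt (A : Set (Sym2 V)) (hA : ∀ v : V, ∃! e, e ∈ A ∧ v ∈ e) (v : V) : V :=
  Sym2.Mem.other' (hA v).exists.choose_spec.2

lemma prt_spec (A : Set (Sym2 V)) (hA : ∀ v : V, ∃! e, e ∈ A ∧ v ∈ e) (v : V) :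
    s(v, prt A hA v) ∈ A := by
  rw [prt, Sym2.other_spec']
  exact (hA v).exists.choose_spec.1

lemma prt_adj (hA : PerfM G A) (v : V) : G.Adj v (prt A hA.2 v) := by
  have := hA.1 (prt_spec A hA.2 v)
  rwa [SimpleGraph.mem_edgeSet] at this

lemma prt_ne (hA : PerfM G A) (v : V) : prt A hA.2 v ≠ v := (prt_adj hA v).ne'

lemma edge_eq (hA : PerfM G A) {e : Sym2 V} {v : V} (he : e ∈ A) (hv : v ∈ e) :
    e = s(v, prt A hA.2 v) :=
  pm_unique hA he (prt_spec A hA.2 v) hv (Sym2.mem_mk_left _ _)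

lemma prt_eq (hA : PerfM G A) {u v : V} (h : s(v, u) ∈ A) : u = prt A hA.2 v := by
  have := edge_eq hA h (Sym2.mem_mk_left _ _)
  rw [Sym2.eq_iff] at this
  rcases this with ⟨-, h2⟩ | ⟨h1, h2⟩
  · exact h2
  · subst h2
    exact absurd (hA.1 h) (by simp)


/-! ### finiteness -/

lemma finiteV {M : Finset (Sym2 V)} (hM : PerfM G (↑M : Set (Sym2 V))) : Finite V := by
  rw [← Set.finite_univ_iff]
  have hsub : (Set.univ : Set V) ⊆ ⋃ e ∈ (↑M : Set (Sym2 V)), {v : V | v ∈ e} := by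
    intro v _
    obtain ⟨e, ⟨he, hve⟩, -⟩ := hM.2 v
    exact Set.mem_biUnion he hve
  refine Set.Finite.subset (Set.Finite.biUnion M.finite_toSet fun e _ => ?_) hsub
  induction e with
  | _ a b =>
    have : {v : V | v ∈ s(a, b)} = {a, b} := by
      ext v; simp [Sym2.mem_iff]
    rw [this]
    exact (Set.finite_singleton b).insert a

/-! ### the alternating sequence -/

noncomputable def zseq (p q : V → V) (a : V) : ℕ → V
  | 0 => a
  | n + 1 => if n % 2 = 0 then p (zseq p q a n) else q (zseq p q a n)

lemma zseq_succ (p q : V → V) (a : V) (n : ℕ) :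
    zseq p q a (n+1) = if n % 2 = 0 then p (zseq p q a n) else q (zseq p q a n) := rfl

section Zseq

variable {M M' : Finset (Sym2 V)} (hM : PerfM G (↑M : Set (Sym2 V)))
  (hM' : PerfM G (↑M' : Set (Sym2 V))) {a : V}

/-- The basic invariant: each step of `zseq` is an edge of the symmetric difference,
alternating between `M \ M'` and `M' \ M`. -/
lemma zseq_inv (ha : s(a, prt (M : Set (Sym2 V)) hM.2 a) ∉ M') (n : ℕ) :
    (n % 2 = 0 → s(zseq (prt (M : Set (Sym2 V)) hM.2) (prt (M' : Set (Sym2 V)) hM'.2) a n,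
        zseq (prt (M : Set (Sym2 V)) hM.2) (prt (M' : Set (Sym2 V)) hM'.2) a (n+1)) ∈ M ∧
      s(zseq (prt (M : Set (Sym2 V)) hM.2) (prt (M' : Set (Sym2 V)) hM'.2) a n,
        zseq (prt (M : Set (Sym2 V)) hM.2) (prt (M' : Set (Sym2 V)) hM'.2) a (n+1)) ∉ M') ∧
    (n % 2 = 1 → s(zseq (prt (M : Set (Sym2 V)) hM.2) (prt (M' : Set (Sym2 V)) hM'.2) a n,
        zseq (prt (M : Set (Sym2 V)) hM.2) (prt (M' : Set (Sym2 V)) hM'.2) a (n+1)) ∈ M' ∧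
      s(zseq (prt (M : Set (Sym2 V)) hM.2) (prt (M' : Set (Sym2 V)) hM'.2) a n,
        zseq (prt (M : Set (Sym2 V)) hM.2) (prt (M' : Set (Sym2 V)) hM'.2) a (n+1)) ∉ M) := by
  set p := prt (M : Set (Sym2 V)) hM.2 with hp
  set q := prt (M' : Set (Sym2 V)) hM'.2 with hq
  set z := zseq p q a with hz
  induction n with
  | zero =>
    constructor
    · intro _
      have h1 : z 1 = p a := by rw [hz, zseq_succ]; simp [zseq]
      have h0 : z 0 = a := rfl
      rw [h1, h0]
      exact ⟨by exact_mod_cast prt_spec (M : Set (Sym2 V)) hM.2 a, ha⟩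
    · omega
  | succ n ih =>
    rcases Nat.even_or_odd n with hev | hod
    · -- n even, n+1 odd : the new edge is the M'-edge of z (n+1)
      have hn : n % 2 = 0 := Nat.even_iff.mp hev
      obtain ⟨hin, hout⟩ := ih.1 hn
      have hstep : z (n+2) = q (z (n+1)) := by
        rw [hz, zseq_succ, if_neg (by omega)]
      refine ⟨by omega, fun _ => ?_⟩
      have hmem' : s(z (n+1), z (n+2)) ∈ M' := by
        rw [hstep]; exact_mod_cast prt_spec (M' : Set (Sym2 V)) hM'.2 (z (n+1))
      refine ⟨hmem', fun hmem : s(z (n+1), z (n+2)) ∈ M => ?_⟩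
      -- both this edge and the previous one are M-edges through z (n+1)
      have : s(z n, z (n+1)) = s(z (n+1), z (n+2)) :=
        pm_unique hM (by exact_mod_cast hin) (by exact_mod_cast hmem)
          (Sym2.mem_mk_right _ _) (Sym2.mem_mk_left _ _)
      exact hout (this ▸ hmem')
    · have hn : n % 2 = 1 := Nat.odd_iff.mp hod
      obtain ⟨hin, hout⟩ := ih.2 hn
      have hstep : z (n+2) = p (z (n+1)) := by
        rw [hz, zseq_succ, if_pos (by omega)]
      refine ⟨fun _ => ?_, by omega⟩
      have hmem : s(z (n+1), z (n+2)) ∈ M := by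
        rw [hstep]; exact_mod_cast prt_spec (M : Set (Sym2 V)) hM.2 (z (n+1))
      refine ⟨hmem, fun hmem' : s(z (n+1), z (n+2)) ∈ M' => ?_⟩
      have : s(z n, z (n+1)) = s(z (n+1), z (n+2)) :=
        pm_unique hM' (by exact_mod_cast hin) (by exact_mod_cast hmem')
          (Sym2.mem_mk_right _ _) (Sym2.mem_mk_left _ _)
      exact hout (this ▸ hmem)


end Zseq

/-! ### building a walk from a sequence of adjacent vertices -/

lemma walk_of_seq (z : ℕ → V) (hadj : ∀ n, G.Adj (z n) (z (n+1))) :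
    ∀ n i : ℕ, ∃ wlk : G.Walk (z i) (z (i + n)),
      wlk.support = (List.range' i (n+1)).map z ∧
      wlk.edges = (List.range' i n).map (fun j => s(z j, z (j+1))) := by
  intro n
  induction n with
  | zero =>
    intro i
    refine ⟨SimpleGraph.Walk.nil, ?_, ?_⟩ <;> simp [List.range'_succ]
  | succ n ih =>
    intro i
    obtain ⟨wlk, hs, he⟩ := ih (i+1)
    have hin : (i+1) + n = i + (n+1) := by omega
    refine ⟨SimpleGraph.Walk.cons (hadj i) ((wlk.copy rfl (congrArg z hin))), ?_, ?_⟩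
    · rw [SimpleGraph.Walk.support_cons, SimpleGraph.Walk.support_copy, hs]
      rw [show (n+1)+1 = (n+1)+1 from rfl, List.range'_succ (s := i) (n := n+1) (step := 1), List.range'_succ]
      simp
    · rw [SimpleGraph.Walk.edges_cons, SimpleGraph.Walk.edges_copy, he,
        List.range'_succ]
      simp



/-! ### extracting an alternating cycle from the symmetric difference -/

lemma cycle_exists {M M' : Finset (Sym2 V)} (hM : PerfM G (↑M : Set (Sym2 V)))
    (hM' : PerfM G (↑M' : Set (Sym2 V))) (hD : ∃ e, e ∈ M ∧ e ∉ M') :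
    ∃ (x : V) (c : G.Walk x x), AltCycle G ↑M c ∧ AltCycle G ↑M' c ∧
      ∀ e ∈ c.edges, (e ∈ M ∧ e ∉ M') ∨ (e ∈ M' ∧ e ∉ M) := by
  classical
  obtain ⟨e0, he0M, he0M'⟩ := hD
  set a := (Quot.out e0).1 with ha'
  have hae : a ∈ e0 := Sym2.out_fst_mem e0
  set p := prt (M : Set (Sym2 V)) hM.2 with hp
  set q := prt (M' : Set (Sym2 V)) hM'.2 with hq
  have he0 : e0 = s(a, p a) := edge_eq hM (Finset.mem_coe.mpr he0M) hae
  have ha : s(a, p a) ∉ M' := he0 ▸ he0M'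
  set z := zseq p q a with hz
  have inv := zseq_inv hM hM' ha
  have hadj : ∀ n, G.Adj (z n) (z (n+1)) := by
    intro n
    rcases Nat.even_or_odd n with h | h
    · have h1 := ((inv n).1 (Nat.even_iff.mp h)).1
      have h2 := hM.1 (Finset.mem_coe.mpr h1)
      rwa [SimpleGraph.mem_edgeSet] at h2
    · have h1 := ((inv n).2 (Nat.odd_iff.mp h)).1
      have h2 := hM'.1 (Finset.mem_coe.mpr h1)
      rwa [SimpleGraph.mem_edgeSet] at h2
  have hstep : ∀ n, z (n+1) ≠ z n := fun n => (hadj n).ne'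
  have : Finite V := finiteV hM
  have hninj : ∃ T, ∃ s, s < T ∧ z s = z T := by
    obtain ⟨x, y, hxy, he⟩ := Finite.exists_ne_map_eq_of_infinite z
    rcases lt_or_gt_of_ne hxy with h | h
    · exact ⟨y, x, h, he⟩
    · exact ⟨x, y, h, he.symm⟩
  obtain ⟨t, s, hst, hzs, inj⟩ :
      ∃ t s, s < t ∧ z s = z t ∧ ∀ i k, i < t → k < t → z i = z k → i = k := by
    refine ⟨Nat.find hninj, ?_⟩
    obtain ⟨s, hst, hzs⟩ := Nat.find_spec hninj
    refine ⟨s, hst, hzs, fun i k hi hk hik => ?_⟩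
    by_contra hne
    rcases lt_or_gt_of_ne hne with h | h
    · exact Nat.find_min hninj hk ⟨i, h, hik⟩
    · exact Nat.find_min hninj hi ⟨k, h, hik.symm⟩
  obtain ⟨j, rfl⟩ : ∃ j, t = j + 1 := ⟨t - 1, by omega⟩
  have hsj : s < j := by
    have : s ≠ j := by
      intro h
      subst h
      exact hstep s hzs.symm
    omega
  have hmain : s = 0 ∧ j % 2 = 1 := by
    rcases Nat.even_or_odd j with hje | hjo
    · exfalso
      have hje' : j % 2 = 0 := Nat.even_iff.mp hje
      have hjm := (inv j).1 hje'
      rcases Nat.even_or_odd s with hse | hso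
      · have hse' : s % 2 = 0 := Nat.even_iff.mp hse
        have hsm := (inv s).1 hse'
        have heq : s(z j, z (j+1)) = s(z s, z (s+1)) :=
          pm_unique hM (Finset.mem_coe.mpr hjm.1) (Finset.mem_coe.mpr hsm.1)
            (show z s ∈ s(z j, z (j+1)) by rw [hzs]; exact Sym2.mem_mk_right _ _)
            (Sym2.mem_mk_left _ _)
        rw [Sym2.eq_iff] at heq
        rcases heq with ⟨h1, h2⟩ | ⟨h1, h2⟩
        · have hj1 := inj j s (by omega) (by omega) h1
          omega
        · have hj1 := inj j (s+1) (by omega) (by omega) h1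
          omega
      · have hso' : s % 2 = 1 := Nat.odd_iff.mp hso
        have hs1 : s - 1 + 1 = s := by omega
        have hsm := (inv (s-1)).1 (by omega)
        have heq : s(z j, z (j+1)) = s(z (s-1), z (s-1+1)) :=
          pm_unique hM (Finset.mem_coe.mpr hjm.1) (Finset.mem_coe.mpr hsm.1)
            (show z s ∈ s(z j, z (j+1)) by rw [hzs]; exact Sym2.mem_mk_right _ _)
            (show z s ∈ s(z (s-1), z (s-1+1)) by rw [hs1]; exact Sym2.mem_mk_right _ _)
        rw [Sym2.eq_iff] at heq
        rcases heq with ⟨h1, h2⟩ | ⟨h1, h2⟩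
        · have hj1 := inj j (s-1) (by omega) (by omega) h1
          omega
        · refine hstep (s-1) ?_
          rw [hs1, hzs, h2]
    · have hjo' : j % 2 = 1 := Nat.odd_iff.mp hjo
      have hjm := (inv j).2 hjo'
      rcases Nat.even_or_odd s with hse | hso
      · have hse' : s % 2 = 0 := Nat.even_iff.mp hse
        rcases Nat.eq_zero_or_pos s with hs0 | hs1
        · exact ⟨hs0, hjo'⟩
        · exfalso
          have hs1' : s - 1 + 1 = s := by omega
          have hsm := (inv (s-1)).2 (by omega)
          have heq : s(z j, z (j+1)) = s(z (s-1), z (s-1+1)) :=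
            pm_unique hM' (Finset.mem_coe.mpr hjm.1) (Finset.mem_coe.mpr hsm.1)
              (show z s ∈ s(z j, z (j+1)) by rw [hzs]; exact Sym2.mem_mk_right _ _)
              (show z s ∈ s(z (s-1), z (s-1+1)) by rw [hs1']; exact Sym2.mem_mk_right _ _)
          rw [Sym2.eq_iff] at heq
          rcases heq with ⟨h1, h2⟩ | ⟨h1, h2⟩
          · have hj1 := inj j (s-1) (by omega) (by omega) h1
            omega
          · refine hstep (s-1) ?_
            rw [hs1', hzs, h2]
      · exfalso
        have hso' : s % 2 = 1 := Nat.odd_iff.mp hso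
        have hsm := (inv s).2 hso'
        have heq : s(z j, z (j+1)) = s(z s, z (s+1)) :=
          pm_unique hM' (Finset.mem_coe.mpr hjm.1) (Finset.mem_coe.mpr hsm.1)
            (show z s ∈ s(z j, z (j+1)) by rw [hzs]; exact Sym2.mem_mk_right _ _)
            (Sym2.mem_mk_left _ _)
        rw [Sym2.eq_iff] at heq
        rcases heq with ⟨h1, h2⟩ | ⟨h1, h2⟩
        · have hj1 := inj j s (by omega) (by omega) h1
          omega
        · have hj1 := inj j (s+1) (by omega) (by omega) h1
          omega
  obtain ⟨hs0, hjodd⟩ := hmain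
  subst hs0
  have hj3 : 3 ≤ j := by
    by_contra hc
    have hj1 : j = 1 := by omega
    subst hj1
    have h0 := (inv 0).1 (by norm_num)
    have h1 := (inv 1).2 (by norm_num)
    refine h1.2 ?_
    have hswap : s(z 1, z (1+1)) = s(z 0, z (0+1)) := by
      rw [show (1:ℕ)+1 = 2 from rfl, ← hzs]
      exact Sym2.eq_swap
    rw [hswap]
    exact h0.1
  -- build the cycle walk
  obtain ⟨c₀, hsup, hedg⟩ := walk_of_seq z hadj (j+1) 0
  have hzt : z (0 + (j+1)) = z 0 := by rw [Nat.zero_add]; exact hzs.symm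
  set c := c₀.copy rfl hzt with hc
  have hce : c.edges = (List.range' 0 (j+1)).map (fun n => s(z n, z (n+1))) := by
    rw [hc, SimpleGraph.Walk.edges_copy, hedg]
  have hcs : c.support = (List.range' 0 (j+1+1)).map z := by
    rw [hc, SimpleGraph.Walk.support_copy, hsup]
  have hlen : c.edges.length = j + 1 := by
    rw [hce, List.length_map, List.length_range']
  have hedne : c.edges ≠ [] := by
    intro h
    rw [h] at hlen
    simp at hlen
  have hget : ∀ (i : ℕ) (h : i < c.edges.length), c.edges[i] = s(z i, z (i+1)) := by
    intro i h
    have h' : i < j + 1 := by omega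
    simp only [hce, List.getElem_map, List.getElem_range'_1, Nat.zero_add]
  -- edges are nodup
  have hnd : c.edges.Nodup := by
    rw [hce]
    refine List.Nodup.map_on ?_ List.nodup_range'
    intro i hi k hk hik
    rw [List.mem_range'_1] at hi hk
    rw [Sym2.eq_iff] at hik
    rcases hik with ⟨h1, h2⟩ | ⟨h1, h2⟩
    · exact inj i k (by omega) (by omega) h1
    · exfalso
      rcases eq_or_lt_of_le (show k + 1 ≤ j + 1 by omega) with hk1 | hk1
      · have hzi : z i = z 0 := by rw [h1, hk1, ← hzs]
        have hi0 := inj i 0 (by omega) (by omega) hzi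
        have h3 := inj (i+1) k (by omega) (by omega) h2
        omega
      · have hik' := inj i (k+1) (by omega) (by omega) h1
        rcases eq_or_lt_of_le (show i + 1 ≤ j + 1 by omega) with hi1 | hi1
        · have hzk : z k = z 0 := by rw [← h2, hi1, ← hzs]
          have hk0 := inj k 0 (by omega) (by omega) hzk
          omega
        · have := inj (i+1) k (by omega) (by omega) h2
          omega
  -- support tail nodup
  have hstn : c.support.tail.Nodup := by
    rw [hcs, List.range'_succ, List.map_cons, List.tail_cons]
    refine List.Nodup.map_on ?_ List.nodup_range'
    intro i hi k hk hik
    rw [List.mem_range'_1] at hi hk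
    by_contra hne
    rcases eq_or_lt_of_le (show i ≤ j + 1 by omega) with hi1 | hi1
    · rcases eq_or_lt_of_le (show k ≤ j + 1 by omega) with hk1 | hk1
      · omega
      · have hzk : z k = z 0 := by rw [← hik, hi1, ← hzs]
        have := inj k 0 (by omega) (by omega) hzk
        omega
    · rcases eq_or_lt_of_le (show k ≤ j + 1 by omega) with hk1 | hk1
      · have hzi : z i = z 0 := by rw [hik, hk1, ← hzs]
        have := inj i 0 (by omega) (by omega) hzi
        omega
      · exact hne (inj i k (by omega) (by omega) hik)
  have hnil : c ≠ SimpleGraph.Walk.nil := by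
    intro h
    apply hedne
    rw [h]
    rfl
  have hcyc : c.IsCycle := by
    rw [SimpleGraph.Walk.isCycle_def]
    exact ⟨SimpleGraph.Walk.isTrail_def _ |>.mpr hnd, hnil, hstn⟩
  -- alternation chains
  have hchainM : AltList (↑M : Set (Sym2 V)) c.edges := by
    rw [AltList, List.Chain', List.isChain_iff_getElem]
    intro i h
    have hi : i < j := by omega
    simp only [List.get_eq_getElem, hget i (by omega), hget (i+1) (by omega), Finset.mem_coe]
    rcases Nat.even_or_odd i with hev | hod
    · have h1 := (inv i).1 (Nat.even_iff.mp hev)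
      have h2 := (inv (i+1)).2 (by have := Nat.even_iff.mp hev; omega)
      exact ⟨fun _ => h2.2, fun _ => h1.1⟩
    · have h1 := (inv i).2 (Nat.odd_iff.mp hod)
      have h2 := (inv (i+1)).1 (by have := Nat.odd_iff.mp hod; omega)
      exact ⟨fun hc' => absurd hc' h1.2, fun hc' => absurd h2.1 hc'⟩
  have hchainM' : AltList (↑M' : Set (Sym2 V)) c.edges := by
    rw [AltList, List.Chain', List.isChain_iff_getElem]
    intro i h
    have hi : i < j := by omega
    simp only [List.get_eq_getElem, hget i (by omega), hget (i+1) (by omega), Finset.mem_coe]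
    rcases Nat.even_or_odd i with hev | hod
    · have h1 := (inv i).1 (Nat.even_iff.mp hev)
      have h2 := (inv (i+1)).2 (by have := Nat.even_iff.mp hev; omega)
      exact ⟨fun hc' => absurd hc' h1.2, fun hc' => absurd h2.1 hc'⟩
    · have h1 := (inv i).2 (Nat.odd_iff.mp hod)
      have h2 := (inv (i+1)).1 (by have := Nat.odd_iff.mp hod; omega)
      exact ⟨fun _ => h2.2, fun _ => h1.1⟩
  have hlast : c.edges.getLast hedne = s(z j, z (j+1)) := by
    rw [List.getLast_eq_getElem]
    have h1 : c.edges.length - 1 = j := by omega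
    simp only [h1]
    exact hget j (by omega)
  have hhead : c.edges.head hedne = s(z 0, z 1) := by
    rw [List.head_eq_getElem_zero]
    exact hget 0 (by omega)
  have hj0 := (inv 0).1 (by norm_num)
  have hjj := (inv j).2 hjodd
  refine ⟨z 0, c, ⟨hcyc, hchainM, ?_⟩, ⟨hcyc, hchainM', ?_⟩, ?_⟩
  · intro h
    rw [hlast, hhead]
    simp only [Finset.mem_coe]
    exact ⟨fun hc' => absurd hc' hjj.2, fun hc' => absurd hj0.1 hc'⟩
  · intro h
    rw [hlast, hhead]
    simp only [Finset.mem_coe]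
    exact ⟨fun _ => hj0.2, fun _ => hjj.1⟩
  · intro e he
    rw [hce] at he
    simp only [List.mem_map, List.mem_range'_1] at he
    obtain ⟨i, hi, rfl⟩ := he
    rcases Nat.even_or_odd i with hev | hod
    · exact Or.inl ((inv i).1 (Nat.even_iff.mp hev))
    · exact Or.inr ((inv i).2 (Nat.odd_iff.mp hod))


/-! ### edges at a vertex of a cycle -/

lemma last_edge_mem {x y : V} (pw : G.Walk y x) (hne : pw.edges ≠ []) :
    x ∈ pw.edges.getLast hne := by
  have hdef : pw.edges = pw.darts.map SimpleGraph.Dart.edge := rfl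
  have hd : pw.darts ≠ [] := by
    intro h0
    apply hne
    rw [hdef, h0]
    rfl
  have h1 : pw.edges.getLast hne = (pw.darts.getLast hd).edge :=
    List.getLast_map (f := SimpleGraph.Dart.edge) (l := pw.darts) hne
  rw [h1]
  have h2 : (pw.darts.getLast hd).toProd.2 = x := by
    rw [SimpleGraph.Walk.getLast_darts_eq_lastDart, SimpleGraph.Walk.lastDart_toProd]
  have h3 : (pw.darts.getLast hd).edge =
      s((pw.darts.getLast hd).toProd.1, (pw.darts.getLast hd).toProd.2) := rfl
  rw [h3, h2]
  exact Sym2.mem_mk_right _ _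

lemma path_edge_end {x : V} : ∀ {y : V} (pw : G.Walk y x), pw.IsPath →
    ∀ e ∈ pw.edges, x ∈ e → ∀ (hne : pw.edges ≠ []), e = pw.edges.getLast hne := by
  intro y pw
  induction pw with
  | nil => simp
  | @cons y u _ h q ih =>
    intro hp e he hx hne
    rw [SimpleGraph.Walk.edges_cons, List.mem_cons] at he
    have hgl : (SimpleGraph.Walk.cons h q).edges.getLast hne =
        (s(y, u) :: q.edges).getLast (List.cons_ne_nil _ _) := rfl
    rw [hgl]
    by_cases hq : q.edges = []
    · have hl : (s(y, u) :: q.edges).getLast (List.cons_ne_nil _ _) = s(y, u) := by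
        rw [List.getLast_eq_getElem]
        simp [hq]
      rcases he with rfl | he
      · exact hl.symm
      · rw [hq] at he
        simp at he
    · have hl : (s(y, u) :: q.edges).getLast (List.cons_ne_nil _ _) = q.edges.getLast hq :=
        List.getLast_cons hq
      rcases he with rfl | he
      · exfalso
        rw [Sym2.mem_iff] at hx
        rcases hx with rfl | rfl
        · have h1 := q.end_mem_support
          have h2 := hp.support_nodup
          rw [SimpleGraph.Walk.support_cons, List.nodup_cons] at h2
          exact h2.1 h1
        · have hq' : q = SimpleGraph.Walk.nil := by
            have := SimpleGraph.Path.loop_eq ⟨q, hp.of_cons⟩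
            exact congrArg Subtype.val this
          apply hq
          rw [hq']
          rfl
      · rw [hl]
        exact ih hp.of_cons e he hx hq

lemma cycle_edges_at_start {x : V} (c : G.Walk x x) (hc : c.IsCycle)
    (hne : c.edges ≠ []) :
    x ∈ c.edges.head hne ∧ x ∈ c.edges.getLast hne ∧
      c.edges.head hne ≠ c.edges.getLast hne ∧
      ∀ e ∈ c.edges, x ∈ e → e = c.edges.head hne ∨ e = c.edges.getLast hne := by
  cases c with
  | nil => simp at hne
  | @cons _ u _ h q =>
    rw [SimpleGraph.Walk.cons_isCycle_iff] at hc
    have hq : q.edges ≠ [] := by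
      intro h0
      have h1 : q.length = 0 := by rw [← SimpleGraph.Walk.length_edges, h0]; rfl
      exact h.ne (SimpleGraph.Walk.eq_of_length_eq_zero h1).symm
    have hhead : ((SimpleGraph.Walk.cons h q).edges).head hne = s(x, u) := rfl
    have hlast : ((SimpleGraph.Walk.cons h q).edges).getLast hne = q.edges.getLast hq := by
      have h5 : (s(x, u) :: q.edges).getLast (List.cons_ne_nil _ _) = q.edges.getLast hq :=
        List.getLast_cons hq
      exact h5
    refine ⟨?_, ?_, ?_, ?_⟩
    · rw [hhead]; exact Sym2.mem_mk_left _ _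
    · rw [hlast]; exact last_edge_mem q hq
    · rw [hhead, hlast]
      intro h1
      exact hc.2 (h1 ▸ List.getLast_mem hq)
    · intro e he hx
      rw [SimpleGraph.Walk.edges_cons, List.mem_cons] at he
      rcases he with rfl | he
      · exact Or.inl hhead.symm
      · right
        rw [hlast]
        exact path_edge_end q hc.1 e he hx hq

/-! ### rotating alternating lists -/

lemma alt_wrap_rotate {α : Type*} (S : Set α) :
    ∀ (l : List α), (l.Chain' fun e f => (e ∈ S ↔ f ∉ S)) →
    (∀ hne : l ≠ [], (l.getLast hne ∈ S ↔ l.head hne ∉ S)) → ∀ (n : ℕ),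
    ((l.rotate n).Chain' fun e f => (e ∈ S ↔ f ∉ S)) ∧
      ∀ hne : l.rotate n ≠ [], ((l.rotate n).getLast hne ∈ S ↔ (l.rotate n).head hne ∉ S) := by
  have step : ∀ (l : List α), (l.Chain' fun e f => (e ∈ S ↔ f ∉ S)) →
      (∀ hne : l ≠ [], (l.getLast hne ∈ S ↔ l.head hne ∉ S)) →
      ((l.rotate 1).Chain' fun e f => (e ∈ S ↔ f ∉ S)) ∧
        ∀ hne : l.rotate 1 ≠ [], ((l.rotate 1).getLast hne ∈ S ↔ (l.rotate 1).head hne ∉ S) := by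
    intro l h1 h2
    cases l with
    | nil => simp [List.Chain']
    | cons a s =>
      rw [List.rotate_cons_succ, List.rotate_zero]
      cases s with
      | nil =>
        simp only [List.nil_append]
        exact ⟨h1, h2⟩
      | cons b s' =>
        have hbs : (b :: s') ≠ [] := List.cons_ne_nil _ _
        have hRab : a ∈ S ↔ b ∉ S := (List.isChain_cons_cons.mp h1).1
        have hlast2 : (a :: b :: s').getLast (List.cons_ne_nil _ _) = (b :: s').getLast hbs :=
          List.getLast_cons hbs
        have hwrap := h2 (List.cons_ne_nil _ _)
        rw [hlast2] at hwrap
        constructor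
        · rw [List.Chain', List.isChain_append]
          refine ⟨(List.isChain_cons_cons.mp h1).2, List.isChain_singleton _, ?_⟩
          intro p hp y hy
          simp only [List.head?_cons, Option.mem_def, Option.some.injEq] at hy
          rw [List.getLast?_eq_getLast_of_ne_nil hbs, Option.mem_def, Option.some.injEq] at hp
          subst hp
          subst hy
          exact hwrap
        · intro hne
          have hl : ((b :: s') ++ [a]).getLast hne = a := by
            rw [List.getLast_append_of_ne_nil hne (List.cons_ne_nil _ _)]
            rfl
          have hh : ((b :: s') ++ [a]).head hne = b := rfl
          rw [hl, hh]
          exact hRab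
  intro l h1 h2 n
  induction n generalizing l with
  | zero => rw [List.rotate_zero]; exact ⟨h1, h2⟩
  | succ n ih =>
    have h3 := step l h1 h2
    have h4 := ih (l.rotate 1) h3.1 h3.2
    rwa [List.rotate_rotate, Nat.add_comm 1 n] at h4

/-! ### two edges at each vertex of an alternating cycle -/

lemma cycle_two_edges {x v : V} (c : G.Walk x x) (hc : c.IsCycle) {S : Set (Sym2 V)}
    (h1 : AltList S c.edges)
    (h2 : ∀ hne : c.edges ≠ [], (c.edges.getLast hne ∈ S ↔ c.edges.head hne ∉ S))
    (hv : v ∈ c.support) :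
    ∃ e f, e ∈ c.edges ∧ f ∈ c.edges ∧ v ∈ e ∧ v ∈ f ∧ e ∈ S ∧ f ∉ S ∧
      ∀ g ∈ c.edges, v ∈ g → g = e ∨ g = f := by
  set c' := c.rotate v hv with hcdef
  have hc' := hc.rotate hv
  have hrot : c.edges.IsRotated c'.edges := (SimpleGraph.Walk.rotate_edges c v hv).symm
  obtain ⟨m, hm⟩ := hrot
  have halt := alt_wrap_rotate S c.edges h1 h2 m
  rw [hm] at halt
  have hne' : c'.edges ≠ [] := by
    intro h0
    have h3 := hc'.three_le_length
    rw [← SimpleGraph.Walk.length_edges, h0] at h3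
    simp at h3
  obtain ⟨hh, hl, hhl, huniq⟩ := cycle_edges_at_start c' hc' hne'
  have hwrap := halt.2 hne'
  have hmem : ∀ e, e ∈ c'.edges ↔ e ∈ c.edges := fun e =>
    (SimpleGraph.Walk.rotate_edges c v hv).mem_iff
  by_cases hhS : c'.edges.head hne' ∈ S
  · refine ⟨c'.edges.head hne', c'.edges.getLast hne', (hmem _).mp (List.head_mem _),
      (hmem _).mp (List.getLast_mem _), hh, hl, hhS, fun hgs => (hwrap.mp hgs) hhS, ?_⟩
    intro g hg hvg
    rcases huniq g ((hmem g).mpr hg) hvg with h | h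
    · exact Or.inl h
    · exact Or.inr h
  · refine ⟨c'.edges.getLast hne', c'.edges.head hne', (hmem _).mp (List.getLast_mem _),
      (hmem _).mp (List.head_mem _), hl, hh, hwrap.mpr hhS, hhS, ?_⟩
    intro g hg hvg
    rcases huniq g ((hmem g).mpr hg) hvg with h | h
    · exact Or.inr h
    · exact Or.inl h

/-! ### flipping a matching along an alternating cycle -/

lemma flip_perf {A : Finset (Sym2 V)} (hA : PerfM G (↑A : Set (Sym2 V))) {x : V} {c : G.Walk x x}
    (hac : AltCycle G (↑A : Set (Sym2 V)) c) :
    PerfM G (↑((A \ c.edges.toFinset) ∪ (c.edges.toFinset \ A)) : Set (Sym2 V)) := by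
  obtain ⟨hc, h1, h2⟩ := hac
  constructor
  · intro e he
    simp only [Finset.coe_union, Set.mem_union, Finset.coe_sdiff, Set.mem_diff,
      Finset.mem_coe, List.mem_toFinset] at he
    rcases he with ⟨heA, -⟩ | ⟨hec, -⟩
    · exact hA.1 heA
    · exact c.edges_subset_edgeSet hec
  · intro v
    by_cases hv : v ∈ c.support
    · obtain ⟨e, f, hec, hfc, hve, hvf, heS, hfS, huniq⟩ := cycle_two_edges c hc h1 h2 hv
      rw [Finset.mem_coe] at heS
      refine ⟨f, ⟨?_, hvf⟩, ?_⟩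
      · simp only [Finset.coe_union, Set.mem_union, Finset.coe_sdiff, Set.mem_diff,
          Finset.mem_coe, List.mem_toFinset]
        right
        exact ⟨hfc, fun hcon => hfS (Finset.mem_coe.mpr hcon)⟩
      · rintro g ⟨hg, hvg⟩
        simp only [Finset.coe_union, Set.mem_union, Finset.coe_sdiff, Set.mem_diff,
          Finset.mem_coe, List.mem_toFinset] at hg
        rcases hg with ⟨hgA, hgE⟩ | ⟨hgE, hgA⟩
        · exfalso
          apply hgE
          have hge : g = e := pm_unique hA (Finset.mem_coe.mpr hgA) heS hvg hve
          rw [hge]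
          exact hec
        · rcases huniq g hgE hvg with rfl | rfl
          · exact absurd heS hgA
          · rfl
    · obtain ⟨e, ⟨heA, hve⟩, huA⟩ := hA.2 v
      rw [Finset.mem_coe] at heA
      have heE : e ∉ c.edges := by
        intro hcon
        apply hv
        induction e with
        | _ p1 p2 =>
          rw [Sym2.mem_iff] at hve
          rcases hve with rfl | rfl
          · exact SimpleGraph.Walk.fst_mem_support_of_mem_edges c hcon
          · exact SimpleGraph.Walk.snd_mem_support_of_mem_edges c hcon
      refine ⟨e, ⟨?_, hve⟩, ?_⟩
      · simp only [Finset.coe_union, Set.mem_union, Finset.coe_sdiff, Set.mem_diff,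
          Finset.mem_coe, List.mem_toFinset]
        exact Or.inl ⟨heA, heE⟩
      · rintro g ⟨hg, hvg⟩
        simp only [Finset.coe_union, Set.mem_union, Finset.coe_sdiff, Set.mem_diff,
          Finset.mem_coe, List.mem_toFinset] at hg
        rcases hg with ⟨hgA, -⟩ | ⟨hgE, -⟩
        · exact huA g ⟨Finset.mem_coe.mpr hgA, hvg⟩
        · exfalso
          apply hv
          induction g with
          | _ p1 p2 =>
            rw [Sym2.mem_iff] at hvg
            rcases hvg with rfl | rfl
            · exact SimpleGraph.Walk.fst_mem_support_of_mem_edges c hgE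
            · exact SimpleGraph.Walk.snd_mem_support_of_mem_edges c hgE

lemma flip_weight (w : Sym2 V → ℕ) (A E : Finset (Sym2 V)) :
    ∃ m : ℕ, (∑ e ∈ (A \ E) ∪ (E \ A), w e) + (∑ e ∈ A, w e) =
      2 * m + ∑ e ∈ E, w e := by
  refine ⟨∑ e ∈ A \ E, w e, ?_⟩
  have h1 : ∑ e ∈ (A \ E) ∪ (E \ A), w e = ∑ e ∈ A \ E, w e + ∑ e ∈ E \ A, w e :=
    Finset.sum_union disjoint_sdiff_sdiff
  have h2 := Finset.sum_inter_add_sum_sdiff A E w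
  have h3 := Finset.sum_inter_add_sum_sdiff E A w
  rw [Finset.inter_comm] at h3
  omega

lemma edges_sum (w : Sym2 V → ℕ) {x : V} {c : G.Walk x x} (hc : c.IsCycle) :
    ∑ e ∈ c.edges.toFinset, w e = (c.edges.map w).sum :=
  List.sum_toFinset _ hc.edges_nodup

/-! ### the forward direction, by induction on the symmetric difference -/

lemma forward_rec (w : Sym2 V → ℕ) :
    ∀ N : ℕ, ∀ M M' : Finset (Sym2 V), PerfM G (↑M : Set (Sym2 V)) →
      PerfM G (↑M' : Set (Sym2 V)) →
      ((M \ M') ∪ (M' \ M)).card ≤ N →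
      (∑ e ∈ M, w e) % 2 ≠ (∑ e ∈ M', w e) % 2 →
      ∃ (x : V) (c : G.Walk x x), AltCycle G (↑M : Set (Sym2 V)) c ∧
        Odd ((c.edges.map w).sum) := by
  intro N
  induction N with
  | zero =>
    intro M M' hM hM' hcard hpar
    exfalso
    have h0 : (M \ M') ∪ (M' \ M) = ∅ :=
      Finset.card_eq_zero.mp (le_antisymm hcard (Nat.zero_le _))
    rw [Finset.union_eq_empty] at h0
    have hMM : M = M' := Finset.Subset.antisymm
      (Finset.sdiff_eq_empty_iff_subset.mp h0.1) (Finset.sdiff_eq_empty_iff_subset.mp h0.2)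
    exact hpar (by rw [hMM])
  | succ N ih =>
    intro M M' hM hM' hcard hpar
    have hne : M ≠ M' := fun h => hpar (by rw [h])
    have hD : ∃ e, e ∈ M ∧ e ∉ M' := by
      by_contra hcon
      push_neg at hcon
      apply hne
      apply Finset.Subset.antisymm
      · intro e he
        exact hcon e he
      · intro e' he'
        have hae : (Quot.out e').1 ∈ e' := Sym2.out_fst_mem e'
        obtain ⟨e, ⟨heM, hea⟩, -⟩ := hM.2 (Quot.out e').1
        rw [Finset.mem_coe] at heM
        have he'e : e' = e := pm_unique hM' (Finset.mem_coe.mpr he')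
          (Finset.mem_coe.mpr (hcon e heM)) hae hea
        rw [he'e]
        exact heM
    obtain ⟨xx, c, hacM, hacM', hmem⟩ := cycle_exists hM hM' hD
    by_cases hodd : Odd ((c.edges.map w).sum)
    · exact ⟨xx, c, hacM, hodd⟩
    · set E := c.edges.toFinset with hE
      set M'' := (M' \ E) ∪ (E \ M') with hM''def
      have hM'' := flip_perf hM' hacM'
      obtain ⟨m, hmw⟩ := flip_weight w M' E
      rw [← hM''def] at hmw
      have hL : (c.edges.map w).sum % 2 = 0 :=
        Nat.even_iff.mp (Nat.not_odd_iff_even.mp hodd)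
      have hEsum : ∑ e ∈ E, w e = (c.edges.map w).sum := edges_sum w hacM.1
      have hpar'' : (∑ e ∈ M, w e) % 2 ≠ (∑ e ∈ M'', w e) % 2 := by omega
      have hED : ∀ e ∈ E, (e ∈ M ∧ e ∉ M') ∨ (e ∈ M' ∧ e ∉ M) := fun e he =>
        hmem e (List.mem_toFinset.mp he)
      have hsd : (M \ M'') ∪ (M'' \ M) = ((M \ M') ∪ (M' \ M)) \ E := by
        ext e
        by_cases heE : e ∈ E
        · have h4 := hED e heE
          simp only [hM''def, Finset.mem_union, Finset.mem_sdiff]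
          tauto
        · simp only [hM''def, Finset.mem_union, Finset.mem_sdiff]
          tauto
      have hEne : ∃ e, e ∈ E := by
        have h3 := hacM.1.three_le_length
        rw [← SimpleGraph.Walk.length_edges] at h3
        cases he : c.edges with
        | nil => rw [he] at h3; simp at h3
        | cons a l => exact ⟨a, by rw [hE, List.mem_toFinset, he]; exact List.mem_cons_self⟩
      have hcard'' : ((M \ M'') ∪ (M'' \ M)).card ≤ N := by
        rw [hsd]
        obtain ⟨e, heE⟩ := hEne
        have heD : e ∈ (M \ M') ∪ (M' \ M) := by
          rcases hED e heE with h4 | h4 <;> simp [Finset.mem_union, Finset.mem_sdiff, h4.1, h4.2]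
        have hss : ((M \ M') ∪ (M' \ M)) \ E ⊂ (M \ M') ∪ (M' \ M) :=
          (Finset.ssubset_iff_of_subset (Finset.sdiff_subset)).mpr
            ⟨e, heD, by simp [heE]⟩
        have h5 := Finset.card_lt_card hss
        omega
      exact ih M M'' hM hM'' hcard'' hpar''

end Stmt4Aux

/-- `G` has a perfect matching of weight ≡ k (mod 2) iff the weight of `M` is ≡ k
(mod 2) or `G` has an `M`-alternating cycle of odd weight. -/
theorem stmt4 {V : Type*} [DecidableEq V] (G : SimpleGraph V)
    (w : Sym2 V → ℕ) (hw : ∀ e, w e ≤ 1)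
    (M : Finset (Sym2 V)) (hM : PerfM G ↑M) (k : ℤ) :
    (∃ M' : Finset (Sym2 V), PerfM G ↑M' ∧ ((∑ e ∈ M', w e : ℕ) : ℤ) ≡ k [ZMOD 2]) ↔
      (((∑ e ∈ M, w e : ℕ) : ℤ) ≡ k [ZMOD 2] ∨
        ∃ (x : V) (c : G.Walk x x), AltCycle G ↑M c ∧ Odd ((c.edges.map w).sum)) := by
  classical
  constructor
  · rintro ⟨M', hM', hk⟩
    by_cases hMk : ((∑ e ∈ M, w e : ℕ) : ℤ) ≡ k [ZMOD 2]
    · exact Or.inl hMk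
    · right
      have hk' : ((∑ e ∈ M', w e : ℕ) : ℤ) % 2 = k % 2 := hk
      have hMk' : ¬ ((∑ e ∈ M, w e : ℕ) : ℤ) % 2 = k % 2 := hMk
      have hpar : (∑ e ∈ M, w e) % 2 ≠ (∑ e ∈ M', w e) % 2 := by omega
      exact Stmt4Aux.forward_rec w _ M M' hM hM' le_rfl hpar
  · rintro (h | ⟨x, c, hac, hodd⟩)
    · exact ⟨M, hM, h⟩
    · by_cases hMk : ((∑ e ∈ M, w e : ℕ) : ℤ) ≡ k [ZMOD 2]
      · exact ⟨M, hM, hMk⟩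
      · refine ⟨(M \ c.edges.toFinset) ∪ (c.edges.toFinset \ M),
          Stmt4Aux.flip_perf hM hac, ?_⟩
        obtain ⟨m, hmw⟩ := Stmt4Aux.flip_weight w M c.edges.toFinset
        have hEsum : ∑ e ∈ c.edges.toFinset, w e = (c.edges.map w).sum :=
          Stmt4Aux.edges_sum w hac.1
        have hMk' : ¬ ((∑ e ∈ M, w e : ℕ) : ℤ) % 2 = k % 2 := hMk
        have hoddn : (c.edges.map w).sum % 2 = 1 := Nat.odd_iff.mp hodd
        show ((∑ e ∈ (M \ c.edges.toFinset) ∪ (c.edges.toFinset \ M), w e : ℕ) : ℤ) % 2 = k % 2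
        omega
end

section
/- Let G be a graph with vertex set V, and let G' be obtained from G by adding, for each vertex v ∈ V, a new vertex v' and a new edge {v, v'}. Then G' has a perfect matching, and for every integer k, G has an odd cycle transversal of size at most k if and only if G' does. -/
/-- `X` is an odd cycle transversal of `G`: `G - X` is bipartite, i.e. the vertices
outside `X` can be 2-colored so that every edge avoiding `X` is bichromatic. -/
def IsOCT {V : Type*} (G : SimpleGraph V) (X : Set V) : Prop :=
  ∃ A : Set V, ∀ u v : V, G.Adj u v → u ∉ X → v ∉ X → (u ∈ A ↔ v ∉ A)

/-- `G'`: to each vertex `v` of `G` (left copy) attach a new pendant vertex `v'`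
(right copy) by an edge. -/
def addPendants {V : Type*} (G : SimpleGraph V) : SimpleGraph (V ⊕ V) where
  Adj x y :=
    match x, y with
    | Sum.inl u, Sum.inl v => G.Adj u v
    | Sum.inl u, Sum.inr v => u = v
    | Sum.inr u, Sum.inl v => u = v
    | Sum.inr _, Sum.inr _ => False
  symm := by
    constructor
    rintro (u | u) (v | v) h
    · exact h.symm
    · exact h.symm
    · exact h.symm
    · exact h.elim
  loopless := by
    constructor
    rintro (u | u) h
    · exact G.loopless.irrefl u h
    · exact h

theorem stmt5 {V : Type*} [Fintype V] [DecidableEq V] (G : SimpleGraph V) :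
    (∃ M : Set (Sym2 (V ⊕ V)), PerfM (addPendants G) M) ∧
    ∀ k : ℕ, (∃ X : Finset V, IsOCT G ↑X ∧ X.card ≤ k) ↔
      (∃ X' : Finset (V ⊕ V), IsOCT (addPendants G) ↑X' ∧ X'.card ≤ k) := by
  constructor
  · refine ⟨{e | ∃ v : V, e = s(Sum.inl v, Sum.inr v)}, ?_, ?_⟩
    · rintro e ⟨v, rfl⟩
      simp [addPendants, SimpleGraph.mem_edgeSet]
    · rintro (v | v)
      · refine ⟨s(Sum.inl v, Sum.inr v), ⟨⟨v, rfl⟩, by simp⟩, ?_⟩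
        rintro e ⟨⟨w, rfl⟩, hm⟩
        simp only [Sym2.mem_iff] at hm
        rcases hm with h | h <;> simp_all
      · refine ⟨s(Sum.inl v, Sum.inr v), ⟨⟨v, rfl⟩, by simp⟩, ?_⟩
        rintro e ⟨⟨w, rfl⟩, hm⟩
        simp only [Sym2.mem_iff] at hm
        rcases hm with h | h <;> simp_all
  · intro k
    constructor
    · rintro ⟨X, ⟨A, hA⟩, hk⟩
      refine ⟨X.map ⟨Sum.inl, Sum.inl_injective⟩, ⟨Sum.elim (· ∈ A) (· ∉ A), ?_⟩,
        by simpa using hk⟩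
      rintro (u | u) (v | v) hadj hu hv
      · exact hA u v hadj (by simpa using hu) (by simpa using hv)
      · obtain rfl : u = v := hadj
        exact not_not.symm
      · obtain rfl : u = v := hadj
        exact Iff.rfl
      · exact hadj.elim
    · rintro ⟨X', ⟨A', hA'⟩, hk⟩
      refine ⟨X'.image (Sum.elim id id), ⟨{v | Sum.inl v ∈ A'}, ?_⟩,
        le_trans (Finset.card_image_le) hk⟩
      intro u v hadj hu hv
      have hu' : Sum.inl u ∉ (X' : Set (V ⊕ V)) := fun h => hu (by
        simp only [Finset.coe_image, Set.mem_image]; exact ⟨Sum.inl u, h, rfl⟩)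
      have hv' : Sum.inl v ∉ (X' : Set (V ⊕ V)) := fun h => hv (by
        simp only [Finset.coe_image, Set.mem_image]; exact ⟨Sum.inl v, h, rfl⟩)
      exact hA' (Sum.inl u) (Sum.inl v) hadj hu' hv'
end

section
/- Let G be a 0/1-edge-weighted graph, M a perfect matching in G, and e = {u,v} ∈ M. Let G' = G − e (edge deletion) with matching M' = M \ {e}, where additionally, if e has weight 1, the weight of every edge incident to u in G' is flipped (0 ↔ 1). Then G has an M-alternating cycle of odd weight through e if and only if G' has an M'-augmenting path of odd weight. -/
open scoped Classical

section helpers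
variable {V : Type*} {M N : Set (Sym2 V)}

def AltCyc (M : Set (Sym2 V)) (l : List (Sym2 V)) : Prop :=
  AltList M l ∧ ∀ h : l ≠ [], (l.getLast h ∈ M ↔ l.head h ∉ M)

lemma altList_congr {l : List (Sym2 V)} (hmn : ∀ x ∈ l, (x ∈ M ↔ x ∈ N)) :
    AltList M l → AltList N l := by
  induction l with
  | nil => intro _; exact List.isChain_nil
  | cons a t ih =>
    intro h
    rcases t with _ | ⟨b, t⟩
    · exact List.isChain_singleton a
    · rw [AltList, List.Chain', List.isChain_cons_cons] at h ⊢
      refine ⟨?_, ih (fun x hx => hmn x (by simp [hx])) h.2⟩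
      have h1 := hmn a (by simp)
      have h2 := hmn b (by simp)
      tauto

lemma altList_reverse {l : List (Sym2 V)} (h : AltList M l) : AltList M l.reverse := by
  rw [AltList, List.Chain', List.isChain_reverse]
  exact (show List.IsChain _ l from h).imp (fun a b hab => by tauto)

lemma altCyc_rotate_one {l : List (Sym2 V)} (h : AltCyc M l) : AltCyc M (l.rotate 1) := by
  rcases l with _ | ⟨a, t⟩
  · simpa using h
  rcases t with _ | ⟨b, t⟩
  · have := h.2 (by simp)
    simp at this
  have hrot : (a :: b :: t).rotate 1 = (b :: t) ++ [a] := by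
    simpa using List.rotate_cons_succ (b :: t) a 0
  rw [hrot]
  obtain ⟨hc, hw⟩ := h
  rw [AltList, List.Chain', List.isChain_cons_cons] at hc
  constructor
  · rw [AltList, List.Chain', List.isChain_append]
    refine ⟨hc.2, List.isChain_singleton a, ?_⟩
    intro x hx y hy
    simp at hy
    subst hy
    have := hw (by simp)
    obtain ⟨hne', hx'⟩ := List.mem_getLast?_eq_getLast hx
    simp [List.getLast_cons] at this ⊢
    rw [← hx'] at this
    exact this
  · intro h'
    rw [List.getLast_append, List.head_append_of_ne_nil (by simp)]
    simpa using hc.1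

lemma altCyc_rotate {l : List (Sym2 V)} (h : AltCyc M l) (n : ℕ) : AltCyc M (l.rotate n) := by
  induction n with
  | zero => simpa using h
  | succ n ih =>
    have : l.rotate (n + 1) = (l.rotate n).rotate 1 := by rw [List.rotate_rotate]
    rw [this]
    exact altCyc_rotate_one ih

lemma altCyc_isRotated {l l' : List (Sym2 V)} (h : AltCyc M l) (hr : l ~r l') : AltCyc M l' := by
  obtain ⟨n, rfl⟩ := hr
  exact altCyc_rotate h n

lemma altCyc_reverse {l : List (Sym2 V)} (h : AltCyc M l) : AltCyc M l.reverse := by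
  refine ⟨altList_reverse h.1, ?_⟩
  intro h'
  have hne : l ≠ [] := by simpa using fun hl => h' (by simp [hl])
  rw [List.getLast_reverse, List.head_reverse]
  have := h.2 hne
  tauto

end helpers

section walkhelpers
variable {V : Type*} {G : SimpleGraph V} {a b : V}

open SimpleGraph

lemma edges_reverse_head {p : G.Walk a b} (h' : p.reverse.edges ≠ []) (h : p.edges ≠ []) :
    p.reverse.edges.head h' = p.edges.getLast h := by
  have h1 := List.head?_eq_head h'
  conv_lhs at h1 => rw [SimpleGraph.Walk.edges_reverse, List.head?_reverse,
    List.getLast?_eq_getLast h]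
  exact (Option.some.inj h1).symm

lemma mem_support_of_mem_edge {p : G.Walk a b} {f : Sym2 V} {x : V} (hf : f ∈ p.edges)
    (hx : x ∈ f) : x ∈ p.support := by
  induction f with
  | _ y z =>
    rcases Sym2.mem_iff.mp hx with rfl | rfl
    · exact p.fst_mem_support_of_mem_edges hf
    · exact p.snd_mem_support_of_mem_edges hf

lemma edges_ne_nil_of_ne {p : G.Walk a b} (h : a ≠ b) : p.edges ≠ [] := by
  intro hl
  exact h (SimpleGraph.Walk.eq_of_length_eq_zero (by rw [← p.length_edges, hl]; rfl))

lemma start_mem_head {p : G.Walk a b} (h : p.edges ≠ []) : a ∈ p.edges.head h := by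
  cases p with
  | nil => simp at h
  | cons h' q => simp

lemma end_mem_getLast {p : G.Walk a b} (h : p.edges ≠ []) : b ∈ p.edges.getLast h := by
  have h' : p.reverse.edges ≠ [] := by simpa [SimpleGraph.Walk.edges_reverse] using h
  have := start_mem_head h'
  rwa [edges_reverse_head h' h] at this

lemma path_start_unique {p : G.Walk a b} (hp : p.IsPath) {f} (hf : f ∈ p.edges) (hx : a ∈ f)
    (h : p.edges ≠ []) : f = p.edges.head h := by
  cases p with
  | nil => simp at h
  | cons h' q =>
    rw [SimpleGraph.Walk.edges_cons] at hf
    rcases List.mem_cons.mp hf with rfl | hf'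
    · simp
    · exfalso
      have : a ∈ q.support := mem_support_of_mem_edge hf' hx
      exact ((SimpleGraph.Walk.cons_isPath_iff _ _).mp hp).2 this

lemma path_end_unique {p : G.Walk a b} (hp : p.IsPath) {f} (hf : f ∈ p.edges) (hx : b ∈ f)
    (h : p.edges ≠ []) : f = p.edges.getLast h := by
  have h' : p.reverse.edges ≠ [] := by simpa [SimpleGraph.Walk.edges_reverse] using h
  have := path_start_unique hp.reverse (f := f)
    (by rw [SimpleGraph.Walk.edges_reverse]; exact List.mem_reverse.mpr hf) hx h'
  rwa [edges_reverse_head h' h] at this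

lemma tail_reverse_perm {α : Type*} {l : List α} {y : α} (hl : l ≠ [])
    (hh : l.head hl = y) (hg : l.getLast hl = y) : l.reverse.tail.Perm l.tail := by
  rcases l with _ | ⟨z, t⟩
  · simp at hl
  simp only [List.head_cons] at hh
  subst hh
  rcases eq_or_ne t [] with rfl | ht
  · simp
  have hgt : t.getLast ht = z := by rwa [List.getLast_cons ht] at hg
  simp only [List.tail_cons]
  conv_lhs => rw [← List.dropLast_append_getLast ht, hgt]
  simp only [List.reverse_cons, List.reverse_append, List.reverse_cons, List.reverse_nil,
    List.nil_append, List.cons_append, List.tail_cons]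
  calc (t.dropLast.reverse ++ [z] : List α).Perm (t.dropLast ++ [z]) :=
        (t.dropLast.reverse_perm).append_right _
    _ = t := by rw [← hgt, List.dropLast_append_getLast ht]

lemma isCycle_reverse {c : G.Walk a a} (hc : c.IsCycle) : c.reverse.IsCycle := by
  rw [SimpleGraph.Walk.isCycle_def]
  refine ⟨hc.isTrail.reverse _, ?_, ?_⟩
  · intro hnil
    have h3 := hc.three_le_length
    have : c.reverse.length = 0 := by rw [hnil]; rfl
    rw [SimpleGraph.Walk.length_reverse] at this
    omega
  · rw [SimpleGraph.Walk.support_reverse]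
    have hperm : c.support.reverse.tail.Perm c.support.tail :=
      tail_reverse_perm (y := a) c.support_ne_nil c.head_support c.getLast_support
    exact hperm.nodup_iff.mpr hc.support_nodup

end walkhelpers

section main
variable {V : Type*} [DecidableEq V]

lemma parity_flip (w : Sym2 V → ℕ) (hw : ∀ e, w e ≤ 1) (u v : V)
    (L : List (Sym2 V)) (hN : L.Nodup) (f0 : Sym2 V) (hf0 : f0 ∈ L) (hu0 : u ∈ f0)
    (honly : ∀ f ∈ L, u ∈ f → f = f0) :
    ((L.map (fun f => if w s(u,v) = 1 ∧ u ∈ f then 1 - w f else w f)).sum) % 2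
      = ((L.map w).sum + w s(u,v)) % 2 := by
  classical
  obtain ⟨L1, L2, rfl⟩ := List.append_of_mem hf0
  rw [List.nodup_append] at hN
  obtain ⟨hN1, hN2, hdisj⟩ := hN
  have h1 : f0 ∉ L1 := fun h => hdisj f0 h f0 (by simp) rfl
  have h2 : f0 ∉ L2 := by simpa using (List.nodup_cons.mp hN2).1
  have hu1 : ∀ f ∈ L1, u ∉ f := fun f hf hu =>
    h1 (honly f (by simp [hf]) hu ▸ hf)
  have hu2 : ∀ f ∈ L2, u ∉ f := fun f hf hu =>
    h2 (honly f (by simp [hf]) hu ▸ hf)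
  have e1 : L1.map (fun f => if w s(u,v) = 1 ∧ u ∈ f then 1 - w f else w f) = L1.map w :=
    List.map_congr_left (fun f hf => by simp [hu1 f hf])
  have e2 : L2.map (fun f => if w s(u,v) = 1 ∧ u ∈ f then 1 - w f else w f) = L2.map w :=
    List.map_congr_left (fun f hf => by simp [hu2 f hf])
  simp only [List.map_append, List.map_cons, List.sum_append, List.sum_cons, e1, e2]
  have hwf0 := hw f0
  have hwuv := hw s(u,v)
  by_cases hwe : w s(u,v) = 1
  · simp only [hwe, hu0, and_self, if_true, true_and, if_pos]
    omega
  · simp only [hwe, false_and, if_false]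
    omega

lemma unmatched {G : SimpleGraph V} {M : Finset (Sym2 V)} (hM : PerfM G ↑M) {u v : V}
    (he : s(u,v) ∈ M) (x : V) (hx : x ∈ (s(u,v) : Sym2 V)) :
    ∀ f ∈ M.erase s(u,v), x ∉ f := by
  intro f hf hxf
  obtain ⟨hfne, hfM⟩ := Finset.mem_erase.mp hf
  obtain ⟨e0, _, huniq⟩ := hM.2 x
  have h1 := huniq f ⟨by exact_mod_cast hfM, hxf⟩
  have h2 := huniq s(u,v) ⟨by exact_mod_cast he, hx⟩
  exact hfne (h1.trans h2.symm)

omit [DecidableEq V] in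
lemma cycle_edge_head_or_last {G : SimpleGraph V} {u v : V} (c : G.Walk u u) (hc : c.IsCycle)
    (hm : s(u,v) ∈ c.edges) (hne : c.edges ≠ []) :
    c.edges.head hne = s(u,v) ∨ c.edges.getLast hne = s(u,v) := by
  cases c with
  | nil => simp at hm
  | cons hadj q =>
    rename_i y
    obtain ⟨hqp, hqe⟩ := (SimpleGraph.Walk.cons_isCycle_iff q hadj).mp hc
    rw [SimpleGraph.Walk.edges_cons, List.mem_cons] at hm
    rcases hm with h | h
    · left
      show (s(u,y) :: q.edges).head (by simp) = s(u,v)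
      rw [List.head_cons]
      exact h.symm
    · right
      have hqne : q.edges ≠ [] := fun hl => by simp [hl] at h
      show (s(u,y) :: q.edges).getLast (by simp) = s(u,v)
      rw [List.getLast_cons hqne]
      exact (path_end_unique hqp h (by simp) hqne).symm

lemma key_fwd (G : SimpleGraph V) (w : Sym2 V → ℕ) (hw : ∀ e, w e ≤ 1)
    (M : Finset (Sym2 V)) (hM : PerfM G ↑M) (u v : V) (he : s(u,v) ∈ M)
    (c : G.Walk u u) (hc : c.IsCycle) (ha : AltCyc ↑M c.edges)
    (ho : Odd ((c.edges.map w).sum))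
    (hh : ∀ hne : c.edges ≠ [], c.edges.head hne = s(u,v)) :
    ∃ (a b : V) (p : (G.deleteEdges {s(u,v)}).Walk a b), a ≠ b ∧ p.IsPath ∧
      AltList ↑(M.erase s(u,v)) p.edges ∧ (∀ e ∈ M.erase s(u,v), a ∉ e) ∧
      (∀ e ∈ M.erase s(u,v), b ∉ e) ∧
      Odd ((p.edges.map (fun f => if w s(u,v) = 1 ∧ u ∈ f then 1 - w f else w f)).sum) := by
  cases c with
  | nil => exact absurd rfl hc.ne_nil
  | cons hadj q =>
    rename_i y
    have hne : (SimpleGraph.Walk.cons hadj q).edges ≠ [] := by simp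
    have hhead := hh hne
    have hy : s(u,y) = s(u,v) := by
      have : (s(u,y) :: q.edges).head (by simp) = s(u,v) := hhead
      rwa [List.head_cons] at this
    have hyv : y = v := Sym2.congr_right.mp hy
    subst y
    obtain ⟨hqp, hqe⟩ := (SimpleGraph.Walk.cons_isCycle_iff q hadj).mp hc
    have hvu : v ≠ u := fun h => hadj.ne h.symm
    have hqne : q.edges ≠ [] := edges_ne_nil_of_ne hvu
    have hsub : ∀ f ∈ q.edges, f ∈ (G.deleteEdges {s(u,v)}).edgeSet := by
      intro f hf
      rw [SimpleGraph.edgeSet_deleteEdges]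
      exact ⟨q.edges_subset_edgeSet hf, by simp; rintro rfl; exact hqe hf⟩
    have htr : (q.transfer _ hsub).edges = q.edges := q.edges_transfer hsub
    have haltq : AltList ↑M q.edges := by
      have h1 := ha.1
      rw [SimpleGraph.Walk.edges_cons] at h1
      exact h1.tail
    refine ⟨v, u, q.transfer _ hsub, hvu, hqp.transfer _, ?_, unmatched hM he v (by simp),
      unmatched hM he u (by simp), ?_⟩
    · rw [htr]
      refine altList_congr (fun f hf => ?_) haltq
      have : f ≠ s(u,v) := fun h => hqe (h ▸ hf)
      simp [Finset.mem_erase, this]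
    · rw [htr]
      have hoc : (((SimpleGraph.Walk.cons hadj q).edges).map w).sum
          = w s(u,v) + (q.edges.map w).sum := by
        rw [SimpleGraph.Walk.edges_cons]; simp
      have hpar := parity_flip w hw u v q.edges hqp.isTrail.edges_nodup
        (q.edges.getLast hqne) (List.getLast_mem hqne) (end_mem_getLast hqne)
        (fun f hf hu => path_end_unique hqp hf hu hqne)
      rw [Nat.odd_iff] at ho ⊢
      rw [hoc] at ho
      omega

end main

section main2
variable {V : Type*} [DecidableEq V]

omit [DecidableEq V] in
lemma head_eq_of_eq {α : Type*} {l l' : List α} (h : l = l') (hl : l ≠ []) (hl' : l' ≠ []) :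
    l.head hl = l'.head hl' := by subst h; rfl

omit [DecidableEq V] in
lemma getLast_eq_of_eq {α : Type*} {l l' : List α} (h : l = l') (hl : l ≠ []) (hl' : l' ≠ []) :
    l.getLast hl = l'.getLast hl' := by subst h; rfl

lemma key_bwd (G : SimpleGraph V) (w : Sym2 V → ℕ) (hw : ∀ e, w e ≤ 1)
    (M : Finset (Sym2 V)) (hM : PerfM G ↑M) (u v : V) (he : s(u,v) ∈ M)
    (p : (G.deleteEdges {s(u,v)}).Walk v u) (hp : p.IsPath)
    (halt : AltList ↑(M.erase s(u,v)) p.edges)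
    (ho : Odd ((p.edges.map (fun f => if w s(u,v) = 1 ∧ u ∈ f then 1 - w f else w f)).sum)) :
    ∃ (x : V) (c : G.Walk x x), (c.IsCycle ∧ AltList ↑M c.edges ∧
      ∀ h : c.edges ≠ [], (c.edges.getLast h ∈ (↑M : Set (Sym2 V)) ↔
        c.edges.head h ∉ (↑M : Set (Sym2 V)))) ∧
      Odd ((c.edges.map w).sum) ∧ s(u,v) ∈ c.edges := by
  have hadj : G.Adj u v := by
    rw [← SimpleGraph.mem_edgeSet]
    exact hM.1 (by exact_mod_cast he)
  have hvu : v ≠ u := fun h => hadj.ne h.symm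
  have hpne : p.edges ≠ [] := edges_ne_nil_of_ne hvu
  have hpe : ∀ f ∈ p.edges, f ≠ s(u,v) := by
    intro f hf
    have := p.edges_subset_edgeSet hf
    rw [SimpleGraph.edgeSet_deleteEdges] at this
    simpa using this.2
  have hsub : ∀ f ∈ p.edges, f ∈ G.edgeSet := by
    intro f hf
    have := p.edges_subset_edgeSet hf
    rw [SimpleGraph.edgeSet_deleteEdges] at this
    exact this.1
  set q := p.transfer G hsub with hq
  have htr : q.edges = p.edges := p.edges_transfer hsub
  have hmm : ∀ f ∈ p.edges, (f ∈ (↑(M.erase s(u,v)) : Set (Sym2 V)) ↔ f ∈ (↑M : Set (Sym2 V))) := by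
    intro f hf
    simp [Finset.mem_erase, hpe f hf]
  have haltM : AltList ↑M p.edges := altList_congr hmm halt
  have hum := unmatched hM he u (by simp)
  have hvm := unmatched hM he v (by simp)
  have hheadM : p.edges.head hpne ∉ (↑M : Set (Sym2 V)) := by
    intro hmem
    refine hvm _ (Finset.mem_erase.mpr ⟨hpe _ (List.head_mem hpne), by exact_mod_cast hmem⟩) ?_
    exact start_mem_head hpne
  have hlastM : p.edges.getLast hpne ∉ (↑M : Set (Sym2 V)) := by
    intro hmem
    refine hum _ (Finset.mem_erase.mpr ⟨hpe _ (List.getLast_mem hpne), by exact_mod_cast hmem⟩) ?_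
    exact end_mem_getLast hpne
  refine ⟨u, SimpleGraph.Walk.cons hadj q, ⟨?_, ?_, ?_⟩, ?_, ?_⟩
  · rw [SimpleGraph.Walk.cons_isCycle_iff]
    exact ⟨hp.transfer _, by rw [htr]; exact fun h => hpe _ h rfl⟩
  · rw [SimpleGraph.Walk.edges_cons, htr]
    obtain ⟨f, rest, hfr⟩ := List.exists_cons_of_ne_nil hpne
    rw [hfr]
    rw [AltList, List.Chain', List.isChain_cons]
    constructor
    · intro z hz
      simp only [List.head?_cons, Option.mem_some_iff] at hz
      subst hz
      have hfhead : p.edges.head hpne = f := by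
        rw [head_eq_of_eq hfr hpne (by simp), List.head_cons]
      rw [hfhead] at hheadM
      constructor
      · intro _; exact hheadM
      · intro _; exact_mod_cast he
    · rw [hfr] at haltM; exact haltM
  · intro h
    have hq' : (SimpleGraph.Walk.cons hadj q).edges = s(u,v) :: p.edges := by
      rw [SimpleGraph.Walk.edges_cons, htr]
    rw [getLast_eq_of_eq hq' h (by simp), head_eq_of_eq hq' h (by simp),
      List.getLast_cons hpne, List.head_cons]
    constructor
    · intro hmem; exact absurd (by exact_mod_cast hmem) hlastM
    · intro hmem; exact absurd he hmem
  · rw [SimpleGraph.Walk.edges_cons, htr]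
    have hpar := parity_flip w hw u v p.edges hp.isTrail.edges_nodup
      (p.edges.getLast hpne) (List.getLast_mem hpne) (end_mem_getLast hpne)
      (fun f hf hu => path_end_unique hp hf hu hpne)
    rw [Nat.odd_iff] at ho ⊢
    simp only [List.map_cons, List.sum_cons]
    omega
  · rw [SimpleGraph.Walk.edges_cons]; simp

end main2

/-- `G` has an `M`-alternating cycle of odd weight through `e = {u,v} ∈ M` iff
`G' = G - e` (with weights of edges at `u` flipped when `w e = 1`) has an
`M' = M \\ {e}`-augmenting path of odd weight. -/
theorem stmt10 {V : Type*} [DecidableEq V] (G : SimpleGraph V)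
    (w : Sym2 V → ℕ) (hw : ∀ e, w e ≤ 1)
    (M : Finset (Sym2 V)) (hM : PerfM G ↑M)
    (u v : V) (he : s(u, v) ∈ M) :
    let G' := G.deleteEdges {s(u, v)}
    let M' := M.erase s(u, v)
    let w' : Sym2 V → ℕ := fun f => if w s(u, v) = 1 ∧ u ∈ f then 1 - w f else w f
    ((∃ (x : V) (c : G.Walk x x), AltCycle G ↑M c ∧ Odd ((c.edges.map w).sum) ∧
        s(u, v) ∈ c.edges) ↔
      (∃ (a b : V) (p : G'.Walk a b), a ≠ b ∧ p.IsPath ∧ AltList ↑M' p.edges ∧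
        (∀ e ∈ M', a ∉ e) ∧ (∀ e ∈ M', b ∉ e) ∧ Odd ((p.edges.map w').sum))) := by
  intro G' M' w'
  constructor
  · rintro ⟨x, c, ⟨hcyc, halt, hwrap⟩, hodd, hmem⟩
    have hu : u ∈ c.support := c.fst_mem_support_of_mem_edges hmem
    have hrot : (c.rotate u hu).edges ~r c.edges := c.rotate_edges u hu
    have hcyc1 := hcyc.rotate hu
    have hac1 : AltCyc ↑M (c.rotate u hu).edges := altCyc_isRotated ⟨halt, hwrap⟩ hrot.symm
    have hmem1 : s(u,v) ∈ (c.rotate u hu).edges := hrot.perm.mem_iff.mpr hmem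
    have hodd1 : Odd (((c.rotate u hu).edges.map w).sum) := by
      rwa [List.Perm.sum_eq (hrot.perm.map w)]
    have hne1 : (c.rotate u hu).edges ≠ [] := List.ne_nil_of_mem hmem1
    rcases cycle_edge_head_or_last (c.rotate u hu) hcyc1 hmem1 hne1 with hh | hl
    · exact key_fwd G w hw M hM u v he (c.rotate u hu) hcyc1 hac1 hodd1 (fun _ => hh)
    · refine key_fwd G w hw M hM u v he (c.rotate u hu).reverse (isCycle_reverse hcyc1)
        ?_ ?_ (fun hne => ?_)
      · rw [SimpleGraph.Walk.edges_reverse]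
        exact altCyc_reverse hac1
      · rw [SimpleGraph.Walk.edges_reverse, List.map_reverse, List.sum_reverse]
        exact hodd1
      · rw [edges_reverse_head hne hne1]
        exact hl
  · rintro ⟨a, b, p, hab, hp, halt, hua, hub, ho⟩
    have hend : ∀ (y : V), (∀ e ∈ M', y ∉ e) → y = u ∨ y = v := by
      intro y hy
      obtain ⟨f, ⟨hfM, hyf⟩, _⟩ := hM.2 y
      have hfM' : f ∈ M := by exact_mod_cast hfM
      by_cases hfe : f = s(u,v)
      · subst hfe; exact Sym2.mem_iff.mp hyf
      · exact absurd hyf (hy f (Finset.mem_erase.mpr ⟨hfe, hfM'⟩))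
    rcases hend a hua with rfl | rfl <;> rcases hend b hub with rfl | rfl
    · exact absurd rfl hab
    · obtain ⟨x, c, h1, h2, h3⟩ := key_bwd G w hw M hM a b he p.reverse hp.reverse
        (by rw [SimpleGraph.Walk.edges_reverse]; exact altList_reverse halt)
        (by rw [SimpleGraph.Walk.edges_reverse, List.map_reverse, List.sum_reverse]; exact ho)
      exact ⟨x, c, h1, h2, h3⟩
    · obtain ⟨x, c, h1, h2, h3⟩ := key_bwd G w hw M hM b a he p hp halt ho
      exact ⟨x, c, h1, h2, h3⟩
    · exact absurd rfl hab
end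

section
/- Let G = (V,E) be a graph with a perfect matching M, let F ⊆ M, and construct the graph G^F with vertex set V₁^F ∪ V₂^F where V₁^F = {v₁ : v ∈ V \ V(F)} and V₂^F = {v₂ : v ∈ V}, and edges {v₁, v₂} for v ∈ V \ V(F) together with edges {u_i, v_i} for each edge {u,v} ∈ E with both copies present in V_i^F (i = 1,2). Then M^F = {{u₁,v₁} : {u,v} ∈ M \ F} ∪ {{u₂,v₂} : {u,v} ∈ M} is a perfect matching of G^F. -/
/-- The graph `G^F`: the left class consists of copies `v₁` of the vertices `v ∉ V(F)`,
the right class of copies `v₂` of all vertices; there is an edge `{v₁, v₂}` for each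
`v ∉ V(F)`, and a copy of each edge of `G` inside each class. -/
def GF {V : Type*} (G : SimpleGraph V) (F : Set (Sym2 V)) :
    SimpleGraph ({v : V // ∀ e ∈ F, v ∉ e} ⊕ V) where
  Adj x y :=
    match x, y with
    | Sum.inl a, Sum.inl b => G.Adj a.1 b.1
    | Sum.inl a, Sum.inr b => a.1 = b
    | Sum.inr a, Sum.inl b => b.1 = a
    | Sum.inr a, Sum.inr b => G.Adj a b
  symm := by
    refine ⟨?_⟩
    rintro (a | a) (b | b) h
    · exact h.symm
    · exact h
    · exact h
    · exact h.symm
  loopless := by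
    refine ⟨?_⟩
    rintro (a | a) h
    · exact G.loopless.irrefl a.1 h
    · exact G.loopless.irrefl a h

/-- `M^F = {{u₁,v₁} : {u,v} ∈ M \ F} ∪ {{u₂,v₂} : {u,v} ∈ M}` is a perfect matching
of `G^F`. -/
theorem stmt14 {V : Type*} (G : SimpleGraph V) (M F : Set (Sym2 V))
    (hM : PerfM G M) (hF : F ⊆ M) :
    PerfM (GF G F)
      {x | (∃ a b : {v : V // ∀ e ∈ F, v ∉ e},
              x = s(Sum.inl a, Sum.inl b) ∧ s(a.1, b.1) ∈ M ∧ s(a.1, b.1) ∉ F) ∨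
           (∃ a b : V, x = s(Sum.inr a, Sum.inr b) ∧ s(a, b) ∈ M)} := by
  obtain ⟨hsub, huniq⟩ := hM
  constructor
  · rintro x (⟨a, b, rfl, hab, -⟩ | ⟨a, b, rfl, hab⟩)
    · exact (SimpleGraph.mem_edgeSet G).mp (hsub hab)
    · exact (SimpleGraph.mem_edgeSet G).mp (hsub hab)
  · rintro (a | a)
    · -- left vertex
      obtain ⟨e, ⟨heM, haE⟩, hu⟩ := huniq a.1
      obtain ⟨c, rfl⟩ := Sym2.mem_iff_exists.mp haE
      have hcF : ∀ f ∈ F, c ∉ f := by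
        intro f hf hcf
        obtain ⟨e', he', hu'⟩ := huniq c
        have h1 : f = e' := hu' f ⟨hF hf, hcf⟩
        have h2 : s(a.1, c) = e' := hu' _ ⟨heM, Sym2.mem_mk_right _ _⟩
        exact a.2 f hf (by rw [h1, ← h2]; exact Sym2.mem_mk_left _ _)
      refine ⟨s(Sum.inl a, Sum.inl ⟨c, hcF⟩), ⟨Or.inl ⟨a, ⟨c, hcF⟩, rfl, heM,
        fun h => a.2 _ h (Sym2.mem_mk_left _ _)⟩, Sym2.mem_mk_left _ _⟩, ?_⟩
      rintro y ⟨⟨p, q, rfl, hpq, -⟩ | ⟨p, q, rfl, hpq⟩, hay⟩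
      · rcases Sym2.mem_iff.mp hay with h | h
        · have hp : a = p := Sum.inl_injective h
          subst hp
          have : s(a.1, q.1) = s(a.1, c) := hu _ ⟨hpq, Sym2.mem_mk_left _ _⟩
          have hq : q.1 = c := Sym2.congr_right.mp this
          have : q = (⟨c, hcF⟩ : {v : V // ∀ e ∈ F, v ∉ e}) := Subtype.ext hq
          rw [this]
        · have hq : a = q := Sum.inl_injective h
          subst hq
          have : s(p.1, a.1) = s(a.1, c) := hu _ ⟨hpq, Sym2.mem_mk_right _ _⟩
          have hp : p.1 = c := Sym2.congr_right.mp (by rwa [Sym2.eq_swap] at this)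
          have : p = (⟨c, hcF⟩ : {v : V // ∀ e ∈ F, v ∉ e}) := Subtype.ext hp
          rw [this, Sym2.eq_swap]
      · rcases Sym2.mem_iff.mp hay with h | h <;> exact absurd h (by simp)
    · -- right vertex
      obtain ⟨e, ⟨heM, haE⟩, hu⟩ := huniq a
      obtain ⟨c, rfl⟩ := Sym2.mem_iff_exists.mp haE
      refine ⟨s(Sum.inr a, Sum.inr c), ⟨Or.inr ⟨a, c, rfl, heM⟩, Sym2.mem_mk_left _ _⟩, ?_⟩
      rintro y ⟨⟨p, q, rfl, hpq, -⟩ | ⟨p, q, rfl, hpq⟩, hay⟩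
      · rcases Sym2.mem_iff.mp hay with h | h <;> exact absurd h (by simp)
      · rcases Sym2.mem_iff.mp hay with h | h
        · have hp : a = p := Sum.inr_injective h
          subst hp
          have : s(a, q) = s(a, c) := hu _ ⟨hpq, Sym2.mem_mk_left _ _⟩
          rw [Sym2.congr_right.mp this]
        · have hq : a = q := Sum.inr_injective h
          subst hq
          have : s(p, a) = s(a, c) := hu _ ⟨hpq, Sym2.mem_mk_right _ _⟩
          have hp : p = c := Sym2.congr_right.mp (by rwa [Sym2.eq_swap] at this)
          rw [hp, Sym2.eq_swap]
end
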